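/- Every polynomial function on ℂ⁴ restricted to X = {x₁x₄ + x₂x₃ = 0} that is invariant under the action a ∘ x = (x₁ + a x₂, x₂, x₃ − a x₄, x₄) agrees on X with a polynomial in x₂ and x₄ alone. Equivalently, the algebra of F-invariant regular functions on X is generated by x₂ and x₄. -/

import Mathlib

open MvPolynomial

def actF (a : ℂ) (x : Fin 4 → ℂ) : Fin 4 → ℂ :=
  ![x 0 + a * x 1, x 1, x 2 - a * x 3, x 3]

lemma eval_eval₂_poly (v : Fin 4 → Polynomial ℂ) (t : ℂ) (f : MvPolynomial (Fin 4) ℂ) :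
    Polynomial.eval t (MvPolynomial.eval₂ Polynomial.C v f)
      = MvPolynomial.eval (fun i => Polynomial.eval t (v i)) f := by
  have h := MvPolynomial.eval₂_comp_left (Polynomial.evalRingHom t) Polynomial.C v f
  simp only [Polynomial.coe_evalRingHom] at h
  rw [h]
  have h2 : (Polynomial.evalRingHom t).comp Polynomial.C = RingHom.id ℂ := by
    ext a; simp
  rw [h2, MvPolynomial.eval₂_id]
  rfl

lemma eval_eval₂_mv (v : Fin 4 → MvPolynomial (Fin 2) ℂ) (y : Fin 2 → ℂ)
    (f : MvPolynomial (Fin 4) ℂ) :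
    MvPolynomial.eval y (MvPolynomial.eval₂ MvPolynomial.C v f)
      = MvPolynomial.eval (fun i => MvPolynomial.eval y (v i)) f := by
  have h := MvPolynomial.eval₂_comp_left (MvPolynomial.eval y) MvPolynomial.C v f
  rw [h]
  have h2 : (MvPolynomial.eval y).comp MvPolynomial.C = RingHom.id ℂ := by
    ext a; simp
  rw [h2, MvPolynomial.eval₂_id]
  rfl

theorem stmt11 (f : MvPolynomial (Fin 4) ℂ)
    (hinv : ∀ (a : ℂ) (x : Fin 4 → ℂ), x 0 * x 3 + x 1 * x 2 = 0 →
      MvPolynomial.eval (actF a x) f = MvPolynomial.eval x f) :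
    ∃ g : MvPolynomial (Fin 2) ℂ, ∀ x : Fin 4 → ℂ, x 0 * x 3 + x 1 * x 2 = 0 →
      MvPolynomial.eval x f = MvPolynomial.eval ![x 1, x 3] g := by
  -- orbit lemma
  have lemA : ∀ x : Fin 4 → ℂ, x 0 * x 3 + x 1 * x 2 = 0 → (x 1 ≠ 0 ∨ x 3 ≠ 0) →
      MvPolynomial.eval x f = MvPolynomial.eval ![0, x 1, 0, x 3] f := by
    intro x hx h13
    rcases h13 with h1 | h3
    · have h := hinv (-(x 0) / x 1) x hx
      have hv : actF (-(x 0) / x 1) x = ![0, x 1, 0, x 3] := by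
        funext i
        fin_cases i <;> simp [actF]
        · field_simp
          ring
        · field_simp
          linear_combination hx
      rw [hv] at h
      exact h.symm
    · have h := hinv (x 2 / x 3) x hx
      have hv : actF (x 2 / x 3) x = ![0, x 1, 0, x 3] := by
        funext i
        fin_cases i <;> simp [actF]
        · field_simp
          linear_combination hx
        · field_simp
          ring
      rw [hv] at h
      exact h.symm
  -- degenerate lemma
  have lemB : ∀ x0 x2 : ℂ, MvPolynomial.eval ![x0, 0, x2, 0] f
      = MvPolynomial.eval ![(0:ℂ), 0, 0, 0] f := by
    intro x0 x2
    set v1 : Fin 4 → Polynomial ℂ :=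
      ![Polynomial.C x0, Polynomial.X * Polynomial.C x0, Polynomial.C x2,
        -(Polynomial.X * Polynomial.C x2)] with hv1
    set v2 : Fin 4 → Polynomial ℂ :=
      ![0, Polynomial.C x0 * Polynomial.X, 0, -(Polynomial.C x2 * Polynomial.X)] with hv2
    have key : MvPolynomial.eval₂ Polynomial.C v1 f = MvPolynomial.eval₂ Polynomial.C v2 f := by
      apply Polynomial.eq_of_infinite_eval_eq
      apply Set.Infinite.mono (s := {t : ℂ | t ≠ 0})
      · intro t ht
        simp only [Set.mem_setOf_eq] at ht ⊢
        rw [eval_eval₂_poly, eval_eval₂_poly]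
        by_cases h02 : x0 = 0 ∧ x2 = 0
        · obtain ⟨h0, h2⟩ := h02
          have hvv : (fun i => Polynomial.eval t (v1 i)) = (fun i => Polynomial.eval t (v2 i)) := by
            funext i
            fin_cases i <;> simp [hv1, hv2, h0, h2]
          rw [hvv]
        · set w : Fin 4 → ℂ := fun i => Polynomial.eval t (v1 i) with hw
          have hw0 : w 0 = x0 := by rw [hw]; simp [hv1]
          have hw1 : w 1 = x0 * t := by rw [hw]; simp [hv1]
          have hw2 : w 2 = x2 := by rw [hw]; simp [hv1]
          have hw3 : w 3 = -(x2 * t) := by rw [hw]; simp [hv1]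
          have hX : w 0 * w 3 + w 1 * w 2 = 0 := by
            rw [hw0, hw1, hw2, hw3]; ring
          have h13 : w 1 ≠ 0 ∨ w 3 ≠ 0 := by
            rcases not_and_or.mp h02 with h | h
            · left; rw [hw1]; exact mul_ne_zero h ht
            · right; rw [hw3]; exact neg_ne_zero.mpr (mul_ne_zero h ht)
          have hA := lemA w hX h13
          rw [hA]
          have hvv : (![0, w 1, 0, w 3] : Fin 4 → ℂ) = (fun i => Polynomial.eval t (v2 i)) := by
            funext i
            fin_cases i <;> simp [hw1, hw3, hv2]
          rw [hvv]
      · have hset : {t : ℂ | t ≠ 0} = ({0} : Set ℂ)ᶜ := by ext t; simp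
        rw [hset]
        exact (Set.finite_singleton 0).infinite_compl
    have h1 := congrArg (Polynomial.eval (0 : ℂ)) key
    rw [eval_eval₂_poly, eval_eval₂_poly] at h1
    have e1 : (fun i => Polynomial.eval (0:ℂ) (v1 i)) = ![x0, 0, x2, 0] := by
      funext i; fin_cases i <;> simp [hv1]
    have e2 : (fun i => Polynomial.eval (0:ℂ) (v2 i)) = ![(0:ℂ), 0, 0, 0] := by
      funext i; fin_cases i <;> simp [hv2]
    rw [e1, e2] at h1
    exact h1
  -- define g
  refine ⟨MvPolynomial.eval₂ MvPolynomial.C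
      ![0, MvPolynomial.X 0, 0, MvPolynomial.X 1] f, ?_⟩
  intro x hx
  have hg : ∀ y : Fin 2 → ℂ, MvPolynomial.eval y
      (MvPolynomial.eval₂ MvPolynomial.C ![0, MvPolynomial.X 0, 0, MvPolynomial.X 1] f)
      = MvPolynomial.eval ![(0:ℂ), y 0, 0, y 1] f := by
    intro y
    rw [eval_eval₂_mv]
    have hvv : (fun i => MvPolynomial.eval y ((![0, MvPolynomial.X 0, 0, MvPolynomial.X 1] :
        Fin 4 → MvPolynomial (Fin 2) ℂ) i)) = ![(0:ℂ), y 0, 0, y 1] := by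
      funext i; fin_cases i <;> simp
    rw [hvv]
  rw [hg]
  simp only [Matrix.cons_val_zero, Matrix.cons_val_one, Matrix.head_cons]
  by_cases h13 : x 1 ≠ 0 ∨ x 3 ≠ 0
  · exact lemA x hx h13
  · push_neg at h13
    obtain ⟨h1, h3⟩ := h13
    have hx' : x = ![x 0, 0, x 2, 0] := by
      funext i; fin_cases i <;> simp [h1, h3]
    have hv : (![0, x 1, 0, x 3] : Fin 4 → ℂ) = ![(0:ℂ), 0, 0, 0] := by
      funext i; fin_cases i <;> simp [h1, h3]
    rw [hv, hx']
    exact lemB (x 0) (x 2)
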